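/- The automorphism group of the semigroup B_λ of λ×λ-matrix units is isomorphic to the symmetric group on λ. -/

import Mathlib

/-- The semigroup of `λ×λ`-matrix units: the set `(λ×λ) ∪ {0}`, with `0 = none`. -/
abbrev MU (α : Type*) := Option (α × α)

/-- Multiplication of matrix units: `(a,b)·(c,d) = (a,d)` if `b = c`, and `0` otherwise;
`0` is absorbing on both sides. -/
def mumul {α : Type*} [DecidableEq α] : MU α → MU α → MU α
  | some x, some y => if x.2 = y.1 then some (x.1, y.2) else none
  | _, _ => none

/-- The automorphism group of the semigroup `B_λ`: bijective self-maps preserving the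
multiplication. -/
def AutMU (α : Type*) [DecidableEq α] :=
  {e : Equiv.Perm (MU α) // ∀ x y : MU α, e (mumul x y) = mumul (e x) (e y)}

instance (α : Type*) [DecidableEq α] : Group (AutMU α) where
  mul e f := ⟨e.1 * f.1, fun x y => by
    simp only [Equiv.Perm.mul_apply, f.2, e.2]⟩
  one := ⟨1, fun x y => rfl⟩
  inv e := ⟨e.1⁻¹, fun x y => (Equiv.injective e.1) (by
    rw [Equiv.Perm.coe_inv, Equiv.apply_symm_apply, e.2, Equiv.apply_symm_apply,
      Equiv.apply_symm_apply])⟩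
  mul_assoc e f g := Subtype.ext (mul_assoc _ _ _)
  one_mul e := Subtype.ext (one_mul _)
  mul_one e := Subtype.ext (mul_one _)
  inv_mul_cancel e := Subtype.ext (inv_mul_cancel _)

namespace MUaux
variable {α : Type*} [DecidableEq α]

lemma mumul_none_left (x : MU α) : mumul none x = none := by cases x <;> rfl
lemma mumul_none_right (x : MU α) : mumul x none = none := by cases x <;> rfl

section
variable (p : Equiv.Perm (MU α)) (hp : ∀ x y, p (mumul x y) = mumul (p x) (p y))

include hp in
lemma aut_none : p none = none := by
  have h := hp none (p.symm none)
  rw [mumul_none_left, Equiv.apply_symm_apply, mumul_none_right] at h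
  exact h

include hp in
lemma aut_ne_none (z : α × α) : p (some z) ≠ none := by
  intro h
  exact Option.some_ne_none _ (p.injective (h.trans (aut_none p hp).symm))

include hp in
lemma aut_diag (a : α) : ∃ c : α, p (some (a, a)) = some (c, c) := by
  obtain ⟨⟨c, d⟩, h⟩ := Option.ne_none_iff_exists'.mp (aut_ne_none p hp (a, a))
  have h2 := hp (some (a,a)) (some (a,a))
  rw [h] at h2
  simp [mumul] at h2
  by_cases hdc : d = c
  · exact ⟨c, by rw [h, hdc]⟩
  · rw [if_neg hdc] at h2
    exact absurd h2 (aut_ne_none p hp _)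

/-- The permutation of `α` induced by an automorphism. -/
noncomputable def sig (a : α) : α := (aut_diag p hp a).choose

lemma sig_spec (a : α) : p (some (a, a)) = some (sig p hp a, sig p hp a) :=
  (aut_diag p hp a).choose_spec

lemma aut_some (a b : α) : p (some (a, b)) = some (sig p hp a, sig p hp b) := by
  obtain ⟨⟨c, d⟩, h⟩ := Option.ne_none_iff_exists'.mp (aut_ne_none p hp (a, b))
  have h1 := hp (some (a,a)) (some (a,b))
  have h2 := hp (some (a,b)) (some (b,b))
  rw [sig_spec p hp, h] at h1 h2
  simp [mumul] at h1 h2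
  rw [h] at h1 h2
  -- h1 : (if sig a = c then some (sig a, d) else none) = some (c,d)
  by_cases hc : sig p hp a = c
  · by_cases hd : d = sig p hp b
    · rw [h, ← hc, ← hd]
    · rw [if_neg hd] at h2
      exact absurd h2.symm (Option.some_ne_none _).symm
  · rw [if_neg hc] at h1
    exact absurd h1.symm (Option.some_ne_none _).symm

end

lemma fst_mul (e f : AutMU α) : (e * f).1 = e.1 * f.1 := rfl
lemma fst_one : (1 : AutMU α).1 = 1 := rfl

/-- σ of the inverse automorphism inverts σ. -/
lemma sig_inv_left (e : AutMU α) (a : α) :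
    sig e⁻¹.1 e⁻¹.2 (sig e.1 e.2 a) = a := by
  have h2 := sig_spec e⁻¹.1 e⁻¹.2 (sig e.1 e.2 a)
  have h3 : e⁻¹.1 (some (sig e.1 e.2 a, sig e.1 e.2 a)) = some (a, a) := by
    rw [← sig_spec e.1 e.2 a]
    exact Equiv.symm_apply_apply e.1 _
  rw [h3] at h2
  exact ((Prod.mk.injEq _ _ _ _).mp (Option.some.inj h2.symm)).1

noncomputable def sigPerm (e : AutMU α) : Equiv.Perm α where
  toFun := sig e.1 e.2
  invFun := sig e⁻¹.1 e⁻¹.2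
  left_inv := sig_inv_left e
  right_inv a := by
    have := sig_inv_left e⁻¹ a
    rwa [inv_inv] at this

/-- The automorphism induced by a permutation. -/
def ofPerm (σ : Equiv.Perm α) : AutMU α :=
  ⟨Equiv.optionCongr (σ.prodCongr σ), by
    intro x y
    match x, y with
    | none, y => simp [mumul_none_left, mumul_none_right]
    | some x, none => simp [mumul_none_right, mumul]
    | some (a,b), some (c,d) =>
      simp only [mumul, Equiv.optionCongr_apply]
      by_cases h : b = c
      · simp [h, mumul]
      · simp [h, mumul, σ.injective.ne h]⟩

def ofPermHom : Equiv.Perm α →* AutMU α where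
  toFun := ofPerm
  map_one' := by
    apply Subtype.ext; apply Equiv.ext; intro x
    cases x <;> simp [ofPerm, fst_one]
  map_mul' σ τ := by
    apply Subtype.ext; apply Equiv.ext; intro x
    cases x <;> simp [ofPerm, fst_mul, Prod.map_map] <;> rfl

lemma ofPermHom_apply (σ : Equiv.Perm α) : ofPermHom σ = ofPerm σ := rfl

lemma ofPermHom_bijective : Function.Bijective (ofPermHom (α := α)) := by
  constructor
  · intro σ τ h
    ext a
    have := congrArg (fun e : AutMU α => e.1 (some (a, a))) h
    simpa [ofPermHom_apply, ofPerm, Prod.ext_iff] using this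
  · intro e
    refine ⟨sigPerm e, ?_⟩
    apply Subtype.ext; apply Equiv.ext; intro x
    match x with
    | none => simpa [ofPermHom_apply, ofPerm] using (aut_none e.1 e.2).symm
    | some (a, b) =>
      simpa [ofPermHom_apply, ofPerm, sigPerm] using (aut_some e.1 e.2 a b).symm

end MUaux

/-- The automorphism group of the semigroup `B_λ` of `λ×λ`-matrix units is isomorphic to the
symmetric group on `λ`. -/
theorem matrixUnits_aut_iso_perm (α : Type*) [DecidableEq α] :
    Nonempty (AutMU α ≃* Equiv.Perm α) :=
  ⟨(MulEquiv.ofBijective _ MUaux.ofPermHom_bijective).symm⟩
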